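/- Fix n ≥ 1, ν > 0 and σ ∈ (1/2,1]. There exist constants C > 0 and c > 0 such that for every t ≥ 0 and every ξ ∈ ℝⁿ with 0 < |ξ| ≤ ρ: |∂ₜ𝒦₁(t,ξ) + e^{−(ν/2)t|ξ|^{2σ}} |ξ| sin(t|ξ|)| ≤ C e^{−c(1+t)|ξ|^{2σ}} ( t|ξ|^{4σ} + |ξ|^{2σ} ) and |∂ₜ𝒦₃(t,ξ) − e^{−(ν/2)t|ξ|^{2σ}} cos(t|ξ|)| ≤ C e^{−c(1+t)|ξ|^{2σ}} ( t|ξ|^{4σ−1} + |ξ|^{2σ−1} ), where ∂ₜ denotes the derivative in t. In particular, the time derivatives of 𝒦₁ and 𝒦₃ are NOT approximated by the time derivatives of the kernels e^{−(ν/2)t|ξ|^{2σ}}cos(t|ξ|) and e^{−(ν/2)t|ξ|^{2σ}}sin(t|ξ|)/|ξ|, but by −e^{−(ν/2)t|ξ|^{2σ}}|ξ|sin(t|ξ|) and e^{−(ν/2)t|ξ|^{2σ}}cos(t|ξ|) respectively. -/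

import Mathlib

set_option maxHeartbeats 1000000

private lemma sin_lip (x y : ℝ) : |Real.sin x - Real.sin y| ≤ |x - y| := by
  rw [Real.sin_sub_sin, abs_mul, abs_mul, abs_two]
  have h1 := Real.abs_sin_le_abs (x := (x-y)/2)
  have h2 := Real.abs_cos_le_one ((x+y)/2)
  have h3 : |(x-y)/2| = |x-y|/2 := by rw [abs_div, abs_two]
  nlinarith [abs_nonneg (Real.sin ((x-y)/2)), abs_nonneg ((x-y)/2), abs_nonneg (x-y),
    abs_nonneg (Real.cos ((x+y)/2))]

private lemma cos_lip (x y : ℝ) : |Real.cos x - Real.cos y| ≤ |x - y| := by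
  rw [Real.cos_sub_cos, abs_mul, abs_mul]
  have h1 := Real.abs_sin_le_abs (x := (x-y)/2)
  have h2 := Real.abs_sin_le_one ((x+y)/2)
  have h3 : |(x-y)/2| = |x-y|/2 := by rw [abs_div, abs_two]
  have h4 : |(-2 : ℝ)| = 2 := by norm_num
  rw [h4]
  nlinarith [abs_nonneg (Real.sin ((x-y)/2)), abs_nonneg ((x-y)/2), abs_nonneg (x-y),
    abs_nonneg (Real.sin ((x+y)/2))]

theorem stmt10 (n : ℕ) (hn : 1 ≤ n) (ν σ : ℝ) (hν : 0 < ν)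
    (hσ : σ ∈ Set.Ioc (1/2 : ℝ) 1) (ρ : ℝ)
    (hρ : ρ = (1/2) * (2/ν) ^ ((1:ℝ)/(2*σ - 1)))
    (φ : EuclideanSpace ℝ (Fin n) → ℝ)
    (hφ : ∀ ξ, φ ξ = Real.sqrt (1 - ν^2/4 * ‖ξ‖ ^ (4*σ - 2))) :
    ∃ C > 0, ∃ c > 0, ∀ t : ℝ, 0 ≤ t →
      ∀ ξ : EuclideanSpace ℝ (Fin n), 0 < ‖ξ‖ → ‖ξ‖ ≤ ρ →
        |deriv (fun s => Real.exp (-(ν/2) * s * ‖ξ‖ ^ (2*σ)) * Real.cos (s * ‖ξ‖ * φ ξ)) t +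
            Real.exp (-(ν/2) * t * ‖ξ‖ ^ (2*σ)) * ‖ξ‖ * Real.sin (t * ‖ξ‖)|
          ≤ C * Real.exp (-c * (1 + t) * ‖ξ‖ ^ (2*σ)) *
              (t * ‖ξ‖ ^ (4*σ) + ‖ξ‖ ^ (2*σ)) ∧
        |deriv (fun s => Real.exp (-(ν/2) * s * ‖ξ‖ ^ (2*σ)) *
              Real.sin (s * ‖ξ‖ * φ ξ) / (‖ξ‖ * φ ξ)) t -
            Real.exp (-(ν/2) * t * ‖ξ‖ ^ (2*σ)) * Real.cos (t * ‖ξ‖)|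
          ≤ C * Real.exp (-c * (1 + t) * ‖ξ‖ ^ (2*σ)) *
              (t * ‖ξ‖ ^ (4*σ - 1) + ‖ξ‖ ^ (2*σ - 1)) := by
  obtain ⟨hσ1, hσ2⟩ := hσ
  have h2σ1 : 0 < 2*σ - 1 := by linarith
  have hρpos : 0 < ρ := by rw [hρ]; positivity
  set δ : ℝ := (1/2:ℝ) ^ (4*σ - 2) with hδ
  have hδ0 : 0 < δ := Real.rpow_pos_of_pos (by norm_num) _
  have hδ1 : δ < 1 := Real.rpow_lt_one (by norm_num) (by norm_num) (by linarith)
  set φ₀ : ℝ := Real.sqrt (1 - δ) with hφ₀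
  have hφ₀pos : 0 < φ₀ := Real.sqrt_pos.mpr (by linarith)
  have hρ2σ1 : 0 < ρ ^ (2*σ-1) := Real.rpow_pos_of_pos hρpos _
  set M : ℝ := Real.exp ((ν/2) * ρ ^ (2*σ)) with hM
  have hMpos : 0 < M := Real.exp_pos _
  set C₀ : ℝ := ν/2 + ν^2/4 + ν^2/4 * ρ ^ (2*σ-1) + ν/(2*φ₀) with hC₀
  have hC₀pos : 0 < C₀ := by positivity
  refine ⟨M * C₀, by positivity, ν/2, by positivity, ?_⟩
  intro t ht ξ hr0 hrρ
  set r : ℝ := ‖ξ‖ with hrdef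
  have ha : (0:ℝ) < r ^ (2*σ) := Real.rpow_pos_of_pos hr0 _
  -- ρ^(4σ-2) computation
  have hρ4σ2 : ν^2/4 * ρ ^ (4*σ - 2) = δ := by
    have hbase : (0:ℝ) ≤ (2/ν) ^ ((1:ℝ)/(2*σ-1)) := (Real.rpow_pos_of_pos (by positivity) _).le
    have e1 : ((2/ν) ^ ((1:ℝ)/(2*σ-1))) ^ (4*σ-2) = ((2/ν):ℝ)^(2:ℝ) := by
      rw [← Real.rpow_mul (by positivity)]
      congr 1
      field_simp
      ring
    rw [hρ, Real.mul_rpow (by norm_num) hbase, e1, Real.rpow_two, hδ]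
    field_simp
    ring
  -- φ facts
  have hXδ : ν^2/4 * r ^ (4*σ-2) ≤ δ := by
    have h1 : r ^ (4*σ-2) ≤ ρ ^ (4*σ-2) := Real.rpow_le_rpow hr0.le hrρ (by linarith)
    calc ν^2/4 * r ^ (4*σ-2) ≤ ν^2/4 * ρ ^ (4*σ-2) :=
        mul_le_mul_of_nonneg_left h1 (by positivity)
      _ = δ := hρ4σ2
  have hXnn : 0 ≤ ν^2/4 * r ^ (4*σ-2) := by positivity
  have h1X : 0 < 1 - ν^2/4 * r ^ (4*σ-2) := by linarith
  have hφval : φ ξ = Real.sqrt (1 - ν^2/4 * r ^ (4*σ-2)) := hφ ξ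
  have hφle1 : φ ξ ≤ 1 := by rw [hφval]; exact Real.sqrt_le_one.mpr (by linarith)
  have hφpos : 0 < φ ξ := by rw [hφval]; exact Real.sqrt_pos.mpr h1X
  have hφ₀le : φ₀ ≤ φ ξ := by
    rw [hφval, hφ₀]; exact Real.sqrt_le_sqrt (by linarith)
  have hφsq : φ ξ ^ 2 = 1 - ν^2/4 * r ^ (4*σ-2) := by
    rw [hφval]; exact Real.sq_sqrt h1X.le
  have h1φ : 1 - φ ξ ≤ ν^2/4 * r ^ (4*σ-2) := by nlinarith
  -- rpow identities
  have h4σ : r ^ (4*σ) = r ^ (4*σ-2) * r^2 := by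
    have h := Real.rpow_add hr0 (4*σ-2) 2
    rw [Real.rpow_two] at h
    rw [← h]; congr 1; ring
  have h4σ1 : r ^ (4*σ-1) = r ^ (4*σ-2) * r := by
    have h := Real.rpow_add hr0 (4*σ-2) 1
    rw [Real.rpow_one] at h
    rw [← h]; congr 1; ring
  have h4σ1' : r ^ (4*σ-1) = r ^ (2*σ-1) * r ^ (2*σ) := by
    have h := Real.rpow_add hr0 (2*σ-1) (2*σ)
    rw [← h]; congr 1; ring
  have h2σr : r ^ (2*σ) = r ^ (2*σ-1) * r := by
    have h := Real.rpow_add hr0 (2*σ-1) 1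
    rw [Real.rpow_one] at h
    rw [← h]
    congr 1
    ring
  have hrle : r ^ (2*σ) ≤ ρ ^ (2*σ) := Real.rpow_le_rpow hr0.le hrρ (by linarith)
  have hrle1 : r ^ (2*σ-1) ≤ ρ ^ (2*σ-1) := Real.rpow_le_rpow hr0.le hrρ (by linarith)
  have hr2σ1 : 0 < r ^ (2*σ-1) := Real.rpow_pos_of_pos hr0 _
  have hr4σ : 0 < r ^ (4*σ) := Real.rpow_pos_of_pos hr0 _
  have hr4σ1 : 0 < r ^ (4*σ-1) := Real.rpow_pos_of_pos hr0 _
  -- exponential comparison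
  have hE : Real.exp (-(ν/2) * t * r ^ (2*σ)) ≤ M * Real.exp (-(ν/2) * (1+t) * r ^ (2*σ)) := by
    rw [hM, ← Real.exp_add]
    apply Real.exp_le_exp.mpr
    have := mul_le_mul_of_nonneg_left hrle (le_of_lt (half_pos hν))
    nlinarith [this]
  have hEpos : (0:ℝ) < Real.exp (-(ν/2) * t * r ^ (2*σ)) := Real.exp_pos _
  -- derivatives
  have hlin1 : HasDerivAt (fun s : ℝ => -(ν/2) * s * r ^ (2*σ)) (-(ν/2) * r ^ (2*σ)) t := by
    simpa using ((hasDerivAt_id t).const_mul (-(ν/2))).mul_const (r ^ (2*σ))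
  have hlin2 : HasDerivAt (fun s : ℝ => s * r * φ ξ) (r * φ ξ) t := by
    simpa using ((hasDerivAt_id t).mul_const r).mul_const (φ ξ)
  have hd1 := (hlin1.exp).fun_mul (hlin2.cos)
  have hd3 := ((hlin1.exp).fun_mul (hlin2.sin)).div_const (r * φ ξ)
  rw [hd1.deriv, hd3.deriv]
  set E : ℝ := Real.exp (-(ν/2) * t * r ^ (2*σ)) with hEdef
  set θ : ℝ := t * r * φ ξ with hθ
  have hEexp : E ≤ M * Real.exp (-(ν/2) * (1+t) * r ^ (2*σ)) := hE
  constructor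
  · -- Part 1
    have heq : E * (-(ν/2) * r ^ (2*σ)) * Real.cos θ + E * (-Real.sin θ * (r * φ ξ)) +
          E * r * Real.sin (t * r)
        = E * (-(ν/2) * r ^ (2*σ) * Real.cos θ +
            (r * (Real.sin (t * r) - Real.sin θ) + r * (1 - φ ξ) * Real.sin θ)) := by ring
    rw [heq, abs_mul, abs_of_pos hEpos]
    have hdiff : |Real.sin (t * r) - Real.sin θ| ≤ t * r * (1 - φ ξ) := by
      have h := sin_lip (t * r) θ
      have h2 : |t * r - θ| = t * r * (1 - φ ξ) := by
        rw [hθ, show t * r - t * r * φ ξ = t * r * (1 - φ ξ) from by ring]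
        exact abs_of_nonneg (mul_nonneg (mul_nonneg ht hr0.le) (by linarith))
      exact le_of_le_of_eq h h2
    have hX : |(-(ν/2) * r ^ (2*σ) * Real.cos θ)| ≤ ν/2 * r ^ (2*σ) := by
      rw [abs_mul]
      have e1 : |(-(ν/2) * r ^ (2*σ))| = ν/2 * r ^ (2*σ) := by
        rw [abs_of_nonpos (mul_nonpos_iff.mpr (Or.inr ⟨by linarith, ha.le⟩))]; ring
      rw [e1]
      exact mul_le_of_le_one_right (by positivity) (Real.abs_cos_le_one θ)
    have hY1 : |r * (Real.sin (t * r) - Real.sin θ)| ≤ r * (t * r * (1 - φ ξ)) := by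
      rw [abs_mul, abs_of_nonneg hr0.le]
      exact mul_le_mul_of_nonneg_left hdiff hr0.le
    have hY2 : |r * (1 - φ ξ) * Real.sin θ| ≤ r * (1 - φ ξ) := by
      have h0 : (0:ℝ) ≤ r * (1 - φ ξ) := mul_nonneg hr0.le (by linarith)
      rw [abs_mul, abs_of_nonneg h0]
      exact mul_le_of_le_one_right h0 (Real.abs_sin_le_one θ)
    have hkey1 : r * (t * r * (1 - φ ξ)) ≤ ν^2/4 * (t * r ^ (4*σ)) := by
      calc r * (t * r * (1 - φ ξ)) = t * r^2 * (1 - φ ξ) := by ring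
        _ ≤ t * r^2 * (ν^2/4 * r ^ (4*σ-2)) := mul_le_mul_of_nonneg_left h1φ (by positivity)
        _ = ν^2/4 * (t * (r ^ (4*σ-2) * r^2)) := by ring
        _ = ν^2/4 * (t * r ^ (4*σ)) := by rw [← h4σ]
    have hkey2 : r * (1 - φ ξ) ≤ ν^2/4 * ρ ^ (2*σ-1) * r ^ (2*σ) := by
      calc r * (1 - φ ξ) ≤ r * (ν^2/4 * r ^ (4*σ-2)) := mul_le_mul_of_nonneg_left h1φ hr0.le
        _ = ν^2/4 * (r ^ (4*σ-2) * r) := by ring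
        _ = ν^2/4 * (r ^ (2*σ-1) * r ^ (2*σ)) := by rw [← h4σ1, h4σ1']
        _ ≤ ν^2/4 * (ρ ^ (2*σ-1) * r ^ (2*σ)) :=
            mul_le_mul_of_nonneg_left (mul_le_mul_of_nonneg_right hrle1 ha.le) (by positivity)
        _ = ν^2/4 * ρ ^ (2*σ-1) * r ^ (2*σ) := by ring
    have hinner : |(-(ν/2) * r ^ (2*σ) * Real.cos θ +
          (r * (Real.sin (t * r) - Real.sin θ) + r * (1 - φ ξ) * Real.sin θ))|
        ≤ C₀ * (t * r ^ (4*σ) + r ^ (2*σ)) := by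
      have htri := (abs_add_le (-(ν/2) * r ^ (2*σ) * Real.cos θ)
          (r * (Real.sin (t * r) - Real.sin θ) + r * (1 - φ ξ) * Real.sin θ)).trans
        (add_le_add_right (abs_add_le (r * (Real.sin (t * r) - Real.sin θ))
          (r * (1 - φ ξ) * Real.sin θ)) _)
      have hsum : ν/2 * r ^ (2*σ) + (ν^2/4 * (t * r ^ (4*σ)) + ν^2/4 * ρ ^ (2*σ-1) * r ^ (2*σ))
          ≤ C₀ * (t * r ^ (4*σ) + r ^ (2*σ)) := by
        rw [hC₀]
        have h1 : (0:ℝ) ≤ (ν^2/4 + ν/(2*φ₀)) * r ^ (2*σ) := by positivity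
        have h2 : (0:ℝ) ≤ (ν/2 + ν^2/4 * ρ ^ (2*σ-1) + ν/(2*φ₀)) * (t * r ^ (4*σ)) :=
          mul_nonneg (by positivity) (mul_nonneg ht hr4σ.le)
        linarith [h1, h2]
      linarith [htri, hX, hY1, hY2, hkey1, hkey2, hsum]
    calc E * |(-(ν/2) * r ^ (2*σ) * Real.cos θ +
          (r * (Real.sin (t * r) - Real.sin θ) + r * (1 - φ ξ) * Real.sin θ))|
        ≤ (M * Real.exp (-(ν/2) * (1+t) * r ^ (2*σ))) * (C₀ * (t * r ^ (4*σ) + r ^ (2*σ))) :=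
          mul_le_mul hEexp hinner (abs_nonneg _) (by positivity)
      _ = M * C₀ * Real.exp (-(ν/2) * (1+t) * r ^ (2*σ)) * (t * r ^ (4*σ) + r ^ (2*σ)) := by ring
  · -- Part 2
    have heq : (E * (-(ν/2) * r ^ (2*σ)) * Real.sin θ + E * (Real.cos θ * (r * φ ξ))) / (r * φ ξ) -
          E * Real.cos (t * r)
        = E * (-(ν/2) * r ^ (2*σ) * Real.sin θ / (r * φ ξ) + (Real.cos θ - Real.cos (t * r))) := by
      field_simp
      ring
    rw [heq, abs_mul, abs_of_pos hEpos]
    have hcdiff : |Real.cos θ - Real.cos (t * r)| ≤ t * r * (1 - φ ξ) := by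
      have h := cos_lip θ (t * r)
      have h2 : |θ - t * r| = t * r * (1 - φ ξ) := by
        rw [hθ, show t * r * φ ξ - t * r = -(t * r * (1 - φ ξ)) from by ring, abs_neg]
        exact abs_of_nonneg (mul_nonneg (mul_nonneg ht hr0.le) (by linarith))
      exact le_of_le_of_eq h h2
    have hA : |(-(ν/2) * r ^ (2*σ) * Real.sin θ / (r * φ ξ))| ≤ ν/(2*φ₀) * r ^ (2*σ-1) := by
      rw [abs_div, abs_mul]
      have e1 : |(-(ν/2) * r ^ (2*σ))| = ν/2 * r ^ (2*σ) := by
        rw [abs_of_nonpos (mul_nonpos_iff.mpr (Or.inr ⟨by linarith, ha.le⟩))]; ring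
      have e2 : |r * φ ξ| = r * φ ξ := abs_of_pos (by positivity)
      rw [e1, e2, div_le_iff₀ (by positivity)]
      have h5 : ν/(2*φ₀) * r ^ (2*σ-1) * (r * φ₀) = ν/2 * (r ^ (2*σ-1) * r) := by
        field_simp
      have hs := Real.abs_sin_le_one θ
      have h6 : ν/2 * r ^ (2*σ) = ν/2 * (r ^ (2*σ-1) * r) := by rw [h2σr]
      have hint1 : (0:ℝ) ≤ ν/2 * r ^ (2*σ) * (1 - |Real.sin θ|) :=
        mul_nonneg (by positivity) (by linarith)
      have hint2 : (0:ℝ) ≤ ν/(2*φ₀) * r ^ (2*σ-1) * r * (φ ξ - φ₀) :=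
        mul_nonneg (mul_nonneg (by positivity) hr0.le) (by linarith)
      linarith [hint1, hint2, h5, h6]
    have hkey3 : t * r * (1 - φ ξ) ≤ ν^2/4 * (t * r ^ (4*σ-1)) := by
      calc t * r * (1 - φ ξ) ≤ t * r * (ν^2/4 * r ^ (4*σ-2)) :=
            mul_le_mul_of_nonneg_left h1φ (by positivity)
        _ = ν^2/4 * (t * (r ^ (4*σ-2) * r)) := by ring
        _ = ν^2/4 * (t * r ^ (4*σ-1)) := by rw [← h4σ1]
    have hinner3 : |(-(ν/2) * r ^ (2*σ) * Real.sin θ / (r * φ ξ) + (Real.cos θ - Real.cos (t * r)))|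
        ≤ C₀ * (t * r ^ (4*σ-1) + r ^ (2*σ-1)) := by
      have htri := abs_add_le (-(ν/2) * r ^ (2*σ) * Real.sin θ / (r * φ ξ))
        (Real.cos θ - Real.cos (t * r))
      have hsum : ν/(2*φ₀) * r ^ (2*σ-1) + ν^2/4 * (t * r ^ (4*σ-1))
          ≤ C₀ * (t * r ^ (4*σ-1) + r ^ (2*σ-1)) := by
        rw [hC₀]
        have h1 : (0:ℝ) ≤ (ν/2 + ν^2/4 + ν^2/4 * ρ ^ (2*σ-1)) * r ^ (2*σ-1) := by positivity
        have h2 : (0:ℝ) ≤ (ν/2 + ν^2/4 * ρ ^ (2*σ-1) + ν/(2*φ₀)) * (t * r ^ (4*σ-1)) :=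
          mul_nonneg (by positivity) (mul_nonneg ht hr4σ1.le)
        linarith [h1, h2]
      linarith [htri, hA, hcdiff, hkey3, hsum]
    calc E * |(-(ν/2) * r ^ (2*σ) * Real.sin θ / (r * φ ξ) + (Real.cos θ - Real.cos (t * r)))|
        ≤ (M * Real.exp (-(ν/2) * (1+t) * r ^ (2*σ))) * (C₀ * (t * r ^ (4*σ-1) + r ^ (2*σ-1))) :=
          mul_le_mul hEexp hinner3 (abs_nonneg _) (by positivity)
      _ = M * C₀ * Real.exp (-(ν/2) * (1+t) * r ^ (2*σ)) * (t * r ^ (4*σ-1) + r ^ (2*σ-1)) := by ring
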